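/- Let (J, u, ω, h, P) be a classical solution of the planar non-resistive MHD system in Lagrangian coordinates on ℝ × [0,T] with J > 0 and ρ₀ ≥ 0. Assume there is E₀ ≥ 0 with ∫_ℝ J(y,t)|h(y,t)|² dy ≤ 8π E₀ for all t ∈ [0,T]. Assume furthermore that for every t: ρ₀|ω|²(·,t), (|∂_y ω|²/J)(·,t), (J|h|²)(·,t), and (h·∂_y ω)(·,t) are integrable on ℝ; the map t ↦ ∫_ℝ ρ₀|ω(y,t)|² dy is differentiable with derivative ∫_ℝ 2 ρ₀ ω·∂_t ω dy; and the integration by parts identity ∫_ℝ ρ₀ ω·∂_t ω dy = −μ ∫_ℝ |∂_y ω|²/J dy − (1/(4π)) ∫_ℝ h·∂_y ω dy holds (as is valid when the flux μ ω·∂_y ω / J vanishes at y = ±∞). Then for all t ∈ [0,T]: ∫_ℝ ρ₀ |ω(y,t)|² dy + μ ∫₀ᵗ ∫_ℝ (|∂_y ω|²/J)(y,s) dy ds ≤ ∫_ℝ ρ₀ |ω(y,0)|² dy + (E₀/(2πμ)) t. -/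

import Mathlib

open Real MeasureTheory
open scoped InnerProductSpace

noncomputable section

/-- The plane `ℝ²` as a Euclidean space, target of the transverse velocity and
magnetic field. -/
abbrev E2 := EuclideanSpace ℝ (Fin 2)

/-- Partial derivative in time of a scalar field `f = f(y, t)`. -/
def pdt (f : ℝ → ℝ → ℝ) (y t : ℝ) : ℝ := deriv (fun s => f y s) t

/-- Partial derivative in space of a scalar field `f = f(y, t)`. -/
def pdy (f : ℝ → ℝ → ℝ) (y t : ℝ) : ℝ := deriv (fun z => f z t) y

/-- Partial derivative in time of an `ℝ²`-valued field. -/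
def pdtV (f : ℝ → ℝ → E2) (y t : ℝ) : E2 := deriv (fun s => f y s) t

/-- Partial derivative in space of an `ℝ²`-valued field. -/
def pdyV (f : ℝ → ℝ → E2) (y t : ℝ) : E2 := deriv (fun z => f z t) y

/-- `(J, u, ω, h, P)` is a classical solution of the planar non-resistive MHD system in
Lagrangian coordinates, for times in the set `S`: all the unknowns are twice continuously
differentiable (in particular all partial derivatives appearing in the system exist and
are continuous) and the five equations hold pointwise. -/
structure IsMHDSolution (lam mu gam : ℝ) (ρ₀ : ℝ → ℝ)
    (J u P : ℝ → ℝ → ℝ) (ω h : ℝ → ℝ → E2) (S : Set ℝ) : Prop where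
  smooth_J : ContDiffOn ℝ 2 (fun p : ℝ × ℝ => J p.1 p.2) (Set.univ ×ˢ S)
  smooth_u : ContDiffOn ℝ 2 (fun p : ℝ × ℝ => u p.1 p.2) (Set.univ ×ˢ S)
  smooth_P : ContDiffOn ℝ 2 (fun p : ℝ × ℝ => P p.1 p.2) (Set.univ ×ˢ S)
  smooth_ω : ContDiffOn ℝ 2 (fun p : ℝ × ℝ => ω p.1 p.2) (Set.univ ×ˢ S)
  smooth_h : ContDiffOn ℝ 2 (fun p : ℝ × ℝ => h p.1 p.2) (Set.univ ×ˢ S)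
  /-- (i) `∂ₜ J = ∂_y u` -/
  mass : ∀ y : ℝ, ∀ t ∈ S, pdt J y t = pdy u y t
  /-- (ii) `ρ₀ ∂ₜ u − λ ∂_y(∂_y u / J) + ∂_y P + (1/(4π)) h·∂_y h = 0` -/
  momentum : ∀ y : ℝ, ∀ t ∈ S,
    ρ₀ y * pdt u y t - lam * pdy (fun z s => pdy u z s / J z s) y t
      + pdy P y t + (1 / (4 * π)) * ⟪h y t, pdyV h y t⟫_ℝ = 0
  /-- (iii) `ρ₀ ∂ₜ ω − μ ∂_y(∂_y ω / J) = (1/(4π)) ∂_y h` -/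
  momentumT : ∀ y : ℝ, ∀ t ∈ S,
    ρ₀ y • pdtV ω y t - mu • pdyV (fun z s => (J z s)⁻¹ • pdyV ω z s) y t
      = (1 / (4 * π)) • pdyV h y t
  /-- (iv) `∂ₜ h + (∂_y u / J) h − ∂_y ω / J = 0` -/
  magnetic : ∀ y : ℝ, ∀ t ∈ S,
    pdtV h y t + (pdy u y t / J y t) • h y t - (J y t)⁻¹ • pdyV ω y t = 0
  /-- (v) `∂ₜ P + γ (∂_y u / J) P = (γ−1)(λ (∂_y u / J)² + μ |∂_y ω / J|²)` -/
  pressure : ∀ y : ℝ, ∀ t ∈ S,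
    pdt P y t + gam * (pdy u y t / J y t) * P y t
      = (gam - 1) * (lam * (pdy u y t / J y t) ^ 2 + mu * ‖(J y t)⁻¹ • pdyV ω y t‖ ^ 2)


/-- quantitative form of Lemma 3.4 of the paper, a priori estimate on
the transverse velocity: for a classical solution on `ℝ × [0,T]` with `J > 0`, `ρ₀ ≥ 0`,
magnetic energy bound `∫ J|h|² dy ≤ 8πE₀`, the stated integrability assumptions,
differentiation under the integral sign, and the integration-by-parts identity, one has
`∫ ρ₀|ω(·,t)|² + μ ∫₀ᵗ ∫ |∂_y ω|²/J ≤ ∫ ρ₀|ω(·,0)|² + (E₀/(2πμ)) t` for all `t`. -/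
theorem stmt_17 (T lam mu gam E₀ : ℝ) (hT : 0 < T) (hlam : 0 < lam) (hmu : 0 < mu)
    (hgam : 1 < gam) (hE : 0 ≤ E₀)
    (ρ₀ : ℝ → ℝ) (hρnn : ∀ y : ℝ, 0 ≤ ρ₀ y)
    (J u P : ℝ → ℝ → ℝ) (ω h : ℝ → ℝ → E2)
    (hJpos : ∀ y : ℝ, ∀ t ∈ Set.Icc (0 : ℝ) T, 0 < J y t)
    (hsol : IsMHDSolution lam mu gam ρ₀ J u P ω h (Set.Icc 0 T))
    (hhE : ∀ t ∈ Set.Icc (0 : ℝ) T, ∫ y : ℝ, J y t * ‖h y t‖ ^ 2 ≤ 8 * π * E₀)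
    (hint1 : ∀ t ∈ Set.Icc (0 : ℝ) T, Integrable (fun y => ρ₀ y * ‖ω y t‖ ^ 2))
    (hint2 : ∀ t ∈ Set.Icc (0 : ℝ) T, Integrable (fun y => ‖pdyV ω y t‖ ^ 2 / J y t))
    (hint3 : ∀ t ∈ Set.Icc (0 : ℝ) T, Integrable (fun y => J y t * ‖h y t‖ ^ 2))
    (hint4 : ∀ t ∈ Set.Icc (0 : ℝ) T, Integrable (fun y => ⟪h y t, pdyV ω y t⟫_ℝ))
    (hderiv : ∀ t ∈ Set.Icc (0 : ℝ) T,
      HasDerivAt (fun s => ∫ y : ℝ, ρ₀ y * ‖ω y s‖ ^ 2)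
        (∫ y : ℝ, 2 * ρ₀ y * ⟪ω y t, pdtV ω y t⟫_ℝ) t)
    (hibp : ∀ t ∈ Set.Icc (0 : ℝ) T,
      ∫ y : ℝ, ρ₀ y * ⟪ω y t, pdtV ω y t⟫_ℝ
        = -mu * (∫ y : ℝ, ‖pdyV ω y t‖ ^ 2 / J y t)
          - (1 / (4 * π)) * ∫ y : ℝ, ⟪h y t, pdyV ω y t⟫_ℝ) :
    ∀ t ∈ Set.Icc (0 : ℝ) T,
      (∫ y : ℝ, ρ₀ y * ‖ω y t‖ ^ 2)
          + mu * ∫ s in (0:ℝ)..t, ∫ y : ℝ, ‖pdyV ω y s‖ ^ 2 / J y s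
        ≤ (∫ y : ℝ, ρ₀ y * ‖ω y 0‖ ^ 2) + (E₀ / (2 * π * mu)) * t := by
  intro t ht
  have hπ : (0:ℝ) < π := Real.pi_pos
  set F : ℝ → ℝ := fun s => ∫ y : ℝ, ρ₀ y * ‖ω y s‖ ^ 2 with hFdef
  set G : ℝ → ℝ := fun s => ∫ y : ℝ, ‖pdyV ω y s‖ ^ 2 / J y s with hGdef
  set H : ℝ → ℝ := fun s => ∫ y : ℝ, ⟪h y s, pdyV ω y s⟫_ℝ with hHdef
  set C : ℝ := E₀ / (2 * π * mu) with hCdef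
  have hCnn : 0 ≤ C := by positivity
  -- derivative identity
  have hFd : ∀ s ∈ Set.Icc (0:ℝ) T,
      HasDerivAt F (-(2*mu) * G s - (1/(2*π)) * H s) s := by
    intro s hs
    have h1 := hderiv s hs
    have h2 := hibp s hs
    have h3 : (∫ y : ℝ, 2 * ρ₀ y * ⟪ω y s, pdtV ω y s⟫_ℝ)
        = 2 * ∫ y : ℝ, ρ₀ y * ⟪ω y s, pdtV ω y s⟫_ℝ := by
      rw [← integral_const_mul]
      congr 1; funext y; ring
    rw [h3, h2] at h1
    convert h1 using 1
    ring
  -- nonnegativity of G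
  have hGnn : ∀ s ∈ Set.Icc (0:ℝ) T, 0 ≤ G s := by
    intro s hs
    apply integral_nonneg
    intro y
    exact div_nonneg (by positivity) (hJpos y s hs).le
  -- Cauchy inequality
  have key : ∀ (a b Jv : ℝ), 0 < Jv →
      a * b ≤ 2*π*mu*(a^2/Jv) + 1/(8*π*mu)*(Jv*b^2) := by
    intro a b Jv hJ
    rw [← sub_nonneg]
    have heq : 2*π*mu*(a^2/Jv) + 1/(8*π*mu)*(Jv*b^2) - a*b
        = (4*π*mu*a - Jv*b)^2 / (8*π*mu*Jv) := by
      field_simp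
      ring
    rw [heq]
    positivity
  -- bound on |H|
  have hHb : ∀ s ∈ Set.Icc (0:ℝ) T, |H s| ≤ 2*π*mu * G s + E₀/mu := by
    intro s hs
    have hb : ∀ y : ℝ, |⟪h y s, pdyV ω y s⟫_ℝ|
        ≤ 2*π*mu*(‖pdyV ω y s‖^2 / J y s) + 1/(8*π*mu)*(J y s * ‖h y s‖^2) := by
      intro y
      calc |⟪h y s, pdyV ω y s⟫_ℝ| ≤ ‖h y s‖ * ‖pdyV ω y s‖ := abs_real_inner_le_norm _ _
        _ = ‖pdyV ω y s‖ * ‖h y s‖ := mul_comm _ _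
        _ ≤ _ := key _ _ _ (hJpos y s hs)
    have hIg : Integrable (fun y : ℝ =>
        2*π*mu*(‖pdyV ω y s‖^2 / J y s) + 1/(8*π*mu)*(J y s * ‖h y s‖^2)) :=
      ((hint2 s hs).const_mul _).add ((hint3 s hs).const_mul _)
    have h4 : |H s| ≤ ∫ y : ℝ, |⟪h y s, pdyV ω y s⟫_ℝ| := by
      simpa only [Real.norm_eq_abs] using
        norm_integral_le_integral_norm (μ := MeasureTheory.volume)
          (fun y : ℝ => ⟪h y s, pdyV ω y s⟫_ℝ)
    have h5 : (∫ y : ℝ, |⟪h y s, pdyV ω y s⟫_ℝ|)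
        ≤ ∫ y : ℝ, (2*π*mu*(‖pdyV ω y s‖^2 / J y s) + 1/(8*π*mu)*(J y s * ‖h y s‖^2)) :=
      integral_mono (hint4 s hs).abs hIg hb
    have h6 : (∫ y : ℝ, (2*π*mu*(‖pdyV ω y s‖^2 / J y s) + 1/(8*π*mu)*(J y s * ‖h y s‖^2)))
        = 2*π*mu * G s + 1/(8*π*mu) * ∫ y : ℝ, J y s * ‖h y s‖^2 := by
      rw [integral_add ((hint2 s hs).const_mul _) ((hint3 s hs).const_mul _),
        integral_const_mul, integral_const_mul]
    have h7 : 1/(8*π*mu) * (∫ y : ℝ, J y s * ‖h y s‖^2) ≤ 1/(8*π*mu) * (8*π*E₀) := by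
      apply mul_le_mul_of_nonneg_left (hhE s hs) (by positivity)
    have h8 : 1/(8*π*mu) * (8*π*E₀) = E₀/mu := by field_simp
    linarith [h4, h5, h6.le, h6.ge]
  -- key differential inequality
  have hkey : ∀ s ∈ Set.Icc (0:ℝ) T,
      mu * G s ≤ C - (-(2*mu) * G s - (1/(2*π)) * H s) := by
    intro s hs
    have h1 := hHb s hs
    have h2 := abs_le.mp h1
    have h3 : (1/(2*π)) * (2*π*mu * G s + E₀/mu) = mu * G s + C := by
      rw [hCdef]; field_simp
    have h4 : 1/(2*π) * H s ≤ mu * G s + C := by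
      rw [← h3]; exact mul_le_mul_of_nonneg_left h2.2 (by positivity)
    have h5 : -(mu * G s + C) ≤ 1/(2*π) * H s := by
      have h6 := mul_le_mul_of_nonneg_left h2.1 (show (0:ℝ) ≤ 1/(2*π) by positivity)
      rw [mul_neg, h3] at h6
      exact h6
    linarith [hGnn s hs]
  -- derivative bound in absolute value
  have hFdbd : ∀ s ∈ Set.Icc (0:ℝ) T,
      ‖deriv F s‖ ≤ 3 * mu * G s + C := by
    intro s hs
    rw [(hFd s hs).deriv, Real.norm_eq_abs]
    have h1 := hHb s hs
    have h2 := abs_le.mp h1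
    have h3 : (1/(2*π)) * (2*π*mu * G s + E₀/mu) = mu * G s + C := by
      rw [hCdef]; field_simp
    have h4 : 1/(2*π) * H s ≤ mu * G s + C := by
      rw [← h3]; exact mul_le_mul_of_nonneg_left h2.2 (by positivity)
    have h5 : -(mu * G s + C) ≤ 1/(2*π) * H s := by
      have h6 := mul_le_mul_of_nonneg_left h2.1 (show (0:ℝ) ≤ 1/(2*π) by positivity)
      rw [mul_neg, h3] at h6
      exact h6
    rw [abs_le]
    constructor <;> linarith [mul_nonneg hmu.le (hGnn s hs)]
  have hsub : Set.Icc (0:ℝ) t ⊆ Set.Icc (0:ℝ) T :=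
    Set.Icc_subset_Icc le_rfl ht.2
  by_cases hGint : IntervalIntegrable G MeasureTheory.volume 0 t
  · -- integrable case: FTC
    have hmeas : Measurable (deriv F) := measurable_deriv F
    have hGon : IntegrableOn G (Set.Ioc 0 t) :=
      (intervalIntegrable_iff_integrableOn_Ioc_of_le ht.1).mp hGint
    have hdom : IntegrableOn (fun s => 3 * mu * G s + C) (Set.Ioc 0 t) :=
      (hGon.const_mul _).add ((integrableOn_const_iff).mpr (Or.inr measure_Ioc_lt_top))
    have hF'on : IntegrableOn (deriv F) (Set.Ioc 0 t) := by
      apply hdom.mono' hmeas.aestronglyMeasurable.restrict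
      filter_upwards [ae_restrict_mem measurableSet_Ioc] with s hsm
      exact hFdbd s (hsub ⟨hsm.1.le, hsm.2⟩)
    have hF'int : IntervalIntegrable (deriv F) MeasureTheory.volume 0 t :=
      (intervalIntegrable_iff_integrableOn_Ioc_of_le ht.1).mpr hF'on
    have hftc : ∫ s in (0:ℝ)..t, deriv F s = F t - F 0 := by
      apply intervalIntegral.integral_eq_sub_of_hasDerivAt _ hF'int
      intro s hsm
      rw [Set.uIcc_of_le ht.1] at hsm
      exact ((hFd s (hsub hsm)).differentiableAt).hasDerivAt
    have hmono : (∫ s in (0:ℝ)..t, mu * G s)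
        ≤ ∫ s in (0:ℝ)..t, (C - deriv F s) := by
      apply intervalIntegral.integral_mono_on ht.1 (hGint.const_mul mu)
        (intervalIntegrable_const.sub hF'int)
      intro s hsm
      rw [(hFd s (hsub hsm)).deriv]
      exact hkey s (hsub hsm)
    rw [intervalIntegral.integral_const_mul] at hmono
    rw [intervalIntegral.integral_sub intervalIntegrable_const hF'int,
      intervalIntegral.integral_const, hftc] at hmono
    simp only [smul_eq_mul, sub_zero] at hmono
    have : F t + mu * ∫ s in (0:ℝ)..t, G s ≤ F 0 + C * t := by linarith
    simpa [hFdef, hGdef, hCdef, mul_comm] using this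
  · -- non-integrable case: integral is zero by convention
    have hzero : (∫ s in (0:ℝ)..t, G s) = 0 := intervalIntegral.integral_undef hGint
    -- monotonicity of s ↦ C s - F s
    have hmonoOn : MonotoneOn (fun s => C * s - F s) (Set.Icc 0 T) := by
      apply monotoneOn_of_deriv_nonneg (convex_Icc 0 T)
      · apply ContinuousOn.sub (continuous_const.mul continuous_id).continuousOn
        intro s hs
        exact ((hFd s hs).continuousAt).continuousWithinAt
      · intro s hs
        rw [interior_Icc] at hs
        have hs' : s ∈ Set.Icc (0:ℝ) T := ⟨hs.1.le, hs.2.le⟩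
        have : HasDerivAt (fun s => C * s - F s)
            (C - (-(2*mu) * G s - (1/(2*π)) * H s)) s := by
          simpa using ((hasDerivAt_id s).const_mul C).fun_sub (hFd s hs')
        exact this.differentiableAt.differentiableWithinAt
      · intro s hs
        rw [interior_Icc] at hs
        have hs' : s ∈ Set.Icc (0:ℝ) T := ⟨hs.1.le, hs.2.le⟩
        have hd : HasDerivAt (fun s => C * s - F s)
            (C - (-(2*mu) * G s - (1/(2*π)) * H s)) s := by
          simpa using ((hasDerivAt_id s).const_mul C).fun_sub (hFd s hs')
        rw [hd.deriv]
        have := hkey s hs'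
        have := hGnn s hs'
        nlinarith [hmu.le]
    have h0mem : (0:ℝ) ∈ Set.Icc (0:ℝ) T := ⟨le_rfl, hT.le⟩
    have htmem : t ∈ Set.Icc (0:ℝ) T := ht
    have := hmonoOn h0mem htmem ht.1
    simp only [mul_zero, zero_sub] at this
    have : F t + mu * ∫ s in (0:ℝ)..t, G s ≤ F 0 + C * t := by
      rw [hzero]; linarith
    simpa [hFdef, hGdef, hCdef, mul_comm] using this
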